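/- Let 0 < L < U, γ > 1 with γL ≤ U, and let g: [L, U] → [0, 1] be a nondecreasing function with g(p) = 0 for all p ∈ [L, γL). Suppose that for all p ∈ [γL, U], g(γL)·γL + ∫_{γL}^{p} u dg(u) + L(1 - g(p)) ≥ p/γ, where the integral is a Riemann–Stieltjes integral. Then g(p) ≥ (1/γ)·ln((p - L)/(γL - L)) for all p ∈ [γL, U]. -/

import Mathlib

open MeasureTheory Set

lemma stieltjes_ibp (g : StieltjesFunction ℝ) {a x : ℝ} (hax : a ≤ x) :
    ∫ u in Set.Ioc a x, u ∂g.measure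
      = x * g x - a * g a - ∫ t in a..x, g t := by
  set μ := g.measure.restrict (Set.Ioc a x) with hμ
  have hfin : IsFiniteMeasure μ := by
    constructor
    rw [hμ, Measure.restrict_apply_univ, g.measure_Ioc]
    exact ENNReal.ofReal_lt_top
  have hmem : ∀ᵐ u ∂μ, u ∈ Set.Ioc a x := ae_restrict_mem measurableSet_Ioc
  have hint : Integrable (fun u : ℝ => u - a) μ := by
    refine (integrable_const (x - a)).mono' ((measurable_id.sub_const a).aestronglyMeasurable) ?_
    filter_upwards [hmem] with u hu
    rw [Real.norm_eq_abs, abs_of_nonneg (by linarith [hu.1])]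
    linarith [hu.2]
  have hnn : 0 ≤ᵐ[μ] fun u : ℝ => u - a := by
    filter_upwards [hmem] with u hu
    simp only [Pi.zero_apply]
    linarith [hu.1]
  have hlc := hint.integral_eq_integral_meas_lt hnn
  have hset : ∀ t : ℝ, 0 < t → μ {u : ℝ | t < u - a} = ENNReal.ofReal (g x - g (a + t)) := by
    intro t _
    have h1 : {u : ℝ | t < u - a} = Set.Ioi (a + t) := by
      ext u; simp only [Set.mem_setOf_eq, Set.mem_Ioi]; constructor <;> intro <;> linarith
    rw [hμ, Measure.restrict_apply (by rw [h1]; exact measurableSet_Ioi), h1]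
    have h2 : Set.Ioi (a + t) ∩ Set.Ioc a x = Set.Ioc (a + t) x := by
      ext u; simp only [Set.mem_inter_iff, Set.mem_Ioi, Set.mem_Ioc]
      constructor
      · rintro ⟨h, _, h3⟩; exact ⟨h, h3⟩
      · rintro ⟨h, h3⟩; exact ⟨h, by linarith, h3⟩
    rw [h2, g.measure_Ioc]
  have hcongr : ∀ t ∈ Set.Ioi (0:ℝ),
      (μ {u : ℝ | t < u - a}).toReal
        = Set.indicator (Set.Ioc 0 (x - a)) (fun t => g x - g (a + t)) t := by
    intro t ht
    rw [hset t ht]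
    by_cases hcase : t ≤ x - a
    · rw [Set.indicator_of_mem (Set.mem_Ioc.mpr ⟨ht, hcase⟩)]
      exact ENNReal.toReal_ofReal (sub_nonneg.2 (g.mono (by linarith)))
    · rw [Set.indicator_of_notMem (fun h => hcase h.2)]
      have hle : g x - g (a + t) ≤ 0 := sub_nonpos.2 (g.mono (by push_neg at hcase; linarith))
      rw [ENNReal.ofReal_of_nonpos hle]; simp
  have h3 : ∫ t in Set.Ioi (0:ℝ), (μ {u : ℝ | t < u - a}).toReal
      = ∫ t in Set.Ioc 0 (x - a), (g x - g (a + t)) := by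
    rw [setIntegral_congr_fun measurableSet_Ioi hcongr,
        setIntegral_indicator measurableSet_Ioc,
        Set.inter_eq_self_of_subset_right Set.Ioc_subset_Ioi_self]
  have hgi : IntervalIntegrable (fun t => g (a + t)) volume 0 (x - a) :=
    (g.mono.comp (fun _ _ h => by simpa using h : Monotone (fun t : ℝ => a + t))).intervalIntegrable
  have h4 : ∫ t in Set.Ioc 0 (x - a), (g x - g (a + t))
      = (x - a) * g x - ∫ t in a..x, g t := by
    rw [← intervalIntegral.integral_of_le (by linarith : (0:ℝ) ≤ x - a),
        intervalIntegral.integral_sub intervalIntegrable_const hgi,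
        intervalIntegral.integral_const,
        intervalIntegral.integral_comp_add_left (fun t => g t) a]
    rw [add_zero, add_sub_cancel, smul_eq_mul]
    ring
  have hsplit : ∫ u in Set.Ioc a x, u ∂g.measure
      = (∫ u, (u - a) ∂μ) + a * (g x - g a) := by
    have h0 : ∫ u in Set.Ioc a x, u ∂g.measure = ∫ u, ((u - a) + a) ∂μ := by
      rw [← hμ]; congr 1; ext u; ring
    rw [h0, integral_add hint (integrable_const a), integral_const,
        measureReal_def, hμ, Measure.restrict_apply_univ, g.measure_Ioc,
        ENNReal.toReal_ofReal (sub_nonneg.2 (g.mono hax)), smul_eq_mul]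
    ring
  rw [hsplit, hlc]; simp only [measureReal_def]; rw [h3, h4]; ring

theorem stmt_11 (L U γ : ℝ) (hL : 0 < L) (hLU : L < U) (hγ : 1 < γ)
    (hγL : γ * L ≤ U) (g : StieltjesFunction ℝ)
    (hrange : ∀ p ∈ Set.Icc L U, g p ∈ Set.Icc (0:ℝ) 1)
    (hzero : ∀ p ∈ Set.Ico L (γ * L), g p = 0)
    (hrob : ∀ p ∈ Set.Icc (γ * L) U,
      g (γ * L) * (γ * L) + (∫ u in Set.Ioc (γ * L) p, u ∂g.measure)
        + L * (1 - g p) ≥ p / γ) :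
    ∀ p ∈ Set.Icc (γ * L) U,
      g p ≥ (1 / γ) * Real.log ((p - L) / (γ * L - L)) := by
  set a := γ * L with ha_def
  have hLa : L < a := by
    have : 1 * L < γ * L := by
      exact mul_lt_mul_of_pos_right hγ hL
    simpa using this
  have hγ0 : (0:ℝ) < γ := by linarith
  set φ : ℝ → ℝ := fun x => ∫ t in a..x, (g t : ℝ) with hφ_def
  -- key inequality
  have K : ∀ x ∈ Set.Icc a U, (x - a) / γ + φ x ≤ (x - L) * g x := by
    intro x hx
    have h := hrob x hx
    rw [stieltjes_ibp g hx.1] at h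
    have h2 : x / γ - L = (x - a) / γ := by
      rw [ha_def]; field_simp
    nlinarith [h, h2]
  -- right derivative of φ
  have hφd : ∀ x, HasDerivWithinAt φ (g x) (Set.Ici x) x := by
    intro x
    exact intervalIntegral.integral_hasDerivWithinAt_right
      (g.mono.intervalIntegrable)
      ⟨Set.univ, Filter.univ_mem, (g.mono.measurable.aestronglyMeasurable).restrict⟩
      ((g.right_continuous x).mono Set.Ioi_subset_Ici_self)
  set ψ : ℝ → ℝ := fun x =>
    (1 / γ) * (Real.log (x - L) - Real.log (a - L) + (a - L) / (x - L) - 1) with hψ_def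
  have hψd : ∀ x : ℝ, L < x → HasDerivAt ψ
      ((1 / γ) * (1 / (x - L) + (a - L) * (-1 / (x - L) ^ 2))) x := by
    intro x hx
    have hne : x - L ≠ 0 := by intro h; linarith [sub_pos.2 hx]
    have h1 : HasDerivAt (fun y : ℝ => y - L) 1 x := (hasDerivAt_id x).sub_const L
    have hlog : HasDerivAt (fun y : ℝ => Real.log (y - L)) (1 / (x - L)) x := h1.log hne
    have hinv : HasDerivAt (fun y : ℝ => (y - L)⁻¹) (-1 / (x - L) ^ 2) x := by
      simpa using h1.fun_inv hne
    have hdiv : HasDerivAt (fun y : ℝ => (a - L) / (y - L))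
        ((a - L) * (-1 / (x - L) ^ 2)) x := by
      simpa [div_eq_mul_inv] using hinv.const_mul (a - L)
    exact (((hlog.sub_const (Real.log (a - L))).add hdiv).sub_const 1).const_mul (1 / γ)
  -- apply the comparison lemma
  have main : ∀ x ∈ Set.Icc a U, ψ x ≤ φ x / (x - L) := by
    intro x hx
    refine image_le_of_deriv_right_le_deriv_boundary
      (f := ψ) (f' := fun x => (1 / γ) * (1 / (x - L) + (a - L) * (-1 / (x - L) ^ 2)))
      (B := fun x => φ x / (x - L))
      (B' := fun x => (g x * (x - L) - φ x * 1) / (x - L) ^ 2)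
      ?_ ?_ ?_ ?_ ?_ ?_ hx
    · intro y hy
      exact ((hψd y (lt_of_lt_of_le hLa hy.1)).continuousAt).continuousWithinAt
    · intro y hy
      exact (hψd y (lt_of_lt_of_le hLa hy.1)).hasDerivWithinAt
    · -- ψ a ≤ φ a / (a - L)
      have h1 : φ a = 0 := intervalIntegral.integral_same
      have h2 : ψ a = 0 := by
        rw [hψ_def]
        have : a - L ≠ 0 := by linarith
        field_simp
        ring
      show ψ a ≤ φ a / (a - L)
      rw [h1, h2, zero_div]
    · -- continuity of B
      have hφc : ContinuousOn φ (Set.Icc a U) := by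
        have := intervalIntegral.continuousOn_primitive_interval'
          (μ := volume) (f := fun t => (g t : ℝ)) (b₁ := a) (b₂ := U)
          g.mono.intervalIntegrable Set.left_mem_uIcc
        rwa [Set.uIcc_of_le hγL] at this
      exact hφc.div (continuousOn_id.sub continuousOn_const)
        (fun y hy => sub_ne_zero.2 (ne_of_gt (lt_of_lt_of_le hLa hy.1)))
    · intro y hy
      have hyne : y - L ≠ 0 := by have := lt_of_lt_of_le hLa hy.1; intro h; linarith [sub_pos.2 this]
      exact (hφd y).div ((hasDerivWithinAt_id y _).sub_const L) hyne
    · intro y hy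
      have hyL : 0 < y - L := sub_pos.2 (lt_of_lt_of_le hLa hy.1)
      have hK := K y ⟨hy.1, le_of_lt hy.2⟩
      have h1 : (1 / γ) * (1 / (y - L) + (a - L) * (-1 / (y - L) ^ 2))
          = ((y - a) / γ) / (y - L) ^ 2 := by
        field_simp
        ring
      show (1 / γ) * (1 / (y - L) + (a - L) * (-1 / (y - L) ^ 2))
          ≤ (g y * (y - L) - φ y * 1) / (y - L) ^ 2
      rw [h1]
      gcongr
      have hc : (y - L) * g y = g y * (y - L) := mul_comm _ _
      linarith
  intro p hp
  have hpL : 0 < p - L := sub_pos.2 (lt_of_lt_of_le hLa hp.1)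
  have haL : 0 < a - L := sub_pos.2 hLa
  have hK := K p hp
  have hm := main p hp
  rw [ge_iff_le, Real.log_div (ne_of_gt hpL) (ne_of_gt haL)]
  have hmul : ψ p * (p - L) ≤ φ p := (le_div_iff₀ hpL).mp hm
  have hexp : ψ p * (p - L) = (1 / γ) * ((Real.log (p - L) - Real.log (a - L)) * (p - L)
      + (a - L) - (p - L)) := by
    rw [hψ_def]
    field_simp
  rw [hexp] at hmul
  have hgoal : (1 / γ) * (Real.log (p - L) - Real.log (a - L)) * (p - L) ≤ g p * (p - L) := by
    have hγinv : (p - a) / γ = (1 / γ) * (p - a) := by ring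
    nlinarith [hK, hmul]
  have := (mul_le_mul_iff_of_pos_right hpL).mp hgoal
  linarith [this]
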